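/- Assume additionally that Δ_x ≤ 15/2 for every x ∈ X. Let α be the number of indices r ∈ {1, …, R_I − 1} with U_r ≠ U_{r+1}. Then R_I ≤ α + 2 + log_{5/4}( 900 · log₂(15/Δ₂) · ψ* / ρ(𝒴*(X)) ). (This is the instance-sensitive batch-complexity bound of Theorem 4.1.) -/

import Mathlib

open Matrix

noncomputable section

/-- The probability simplex of design weights over the arm set `X`. -/
def designSimplex {d : ℕ} (X : Finset (Fin d → ℝ)) : Set ((Fin d → ℝ) → ℝ) :=
  {l | (∀ x, 0 ≤ l x) ∧ ∑ x ∈ X, l x = 1}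

/-- The design matrix `A(λ) = ∑_{x ∈ X} λ_x x xᵀ`. -/
def designMat {d : ℕ} (X : Finset (Fin d → ℝ)) (l : (Fin d → ℝ) → ℝ) :
    Matrix (Fin d) (Fin d) ℝ :=
  ∑ x ∈ X, l x • Matrix.vecMulVec x x

/-- The quadratic form `y ↦ yᵀ A(λ)⁻¹ y`. -/
def quadInv {d : ℕ} (X : Finset (Fin d → ℝ)) (l : (Fin d → ℝ) → ℝ)
    (y : Fin d → ℝ) : ℝ :=
  y ⬝ᵥ (designMat X l)⁻¹.mulVec y

/-- The optimal design value `ρ(A) = inf_{λ : A(λ) invertible} max_{y ∈ A} yᵀA(λ)⁻¹y`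
(the maximum over the empty set being `0`). -/
def rho {d : ℕ} (X : Finset (Fin d → ℝ)) (A : Set (Fin d → ℝ)) : ℝ :=
  sInf {v | ∃ l ∈ designSimplex X, IsUnit (designMat X l).det ∧
    v = sSup (insert 0 (quadInv X l '' A))}

/-- `𝒴(S) = {x - x' : x, x' ∈ S, x ≠ x'}`. -/
def Yset {d : ℕ} (S : Set (Fin d → ℝ)) : Set (Fin d → ℝ) :=
  {y | ∃ x ∈ S, ∃ x' ∈ S, x ≠ x' ∧ y = x - x'}

/-- `𝒴*(S) = {x* - x : x ∈ S, x ≠ x*}`. -/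
def YstarSet {d : ℕ} (xstar : Fin d → ℝ) (S : Set (Fin d → ℝ)) : Set (Fin d → ℝ) :=
  (fun x => xstar - x) '' (S \ {xstar})

/-- `ψ* = inf_{λ : A(λ) invertible} max_{x ∈ X, x ≠ x*} (x-x*)ᵀA(λ)⁻¹(x-x*)/Δ_x²`. -/
def psiStar {d : ℕ} (X : Finset (Fin d → ℝ)) (θstar xstar : Fin d → ℝ) : ℝ :=
  sInf {v | ∃ l ∈ designSimplex X, IsUnit (designMat X l).det ∧
    v = sSup (insert 0
      ((fun x => quadInv X l (x - xstar) / (θstar ⬝ᵥ (xstar - x)) ^ 2) ''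
        ((X : Set (Fin d → ℝ)) \ {xstar})))}

lemma sum_mulVec' {d : ℕ} {ι : Type*} (s : Finset ι) (M : ι → Matrix (Fin d) (Fin d) ℝ)
    (v : Fin d → ℝ) : (∑ x ∈ s, M x) *ᵥ v = ∑ x ∈ s, (M x *ᵥ v) := by
  ext i
  simp only [Matrix.mulVec, dotProduct, Matrix.sum_apply, Finset.sum_apply, Finset.sum_mul]
  exact Finset.sum_comm

lemma dotProduct_sum' {d : ℕ} {ι : Type*} (s : Finset ι) (u : Fin d → ℝ)
    (w : ι → Fin d → ℝ) : u ⬝ᵥ (∑ x ∈ s, w x) = ∑ x ∈ s, u ⬝ᵥ w x := by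
  simp only [dotProduct, Finset.sum_apply, Finset.mul_sum]
  exact Finset.sum_comm

lemma bilin_designMat {d : ℕ} (X : Finset (Fin d → ℝ)) (l : (Fin d → ℝ) → ℝ)
    (u v : Fin d → ℝ) :
    u ⬝ᵥ (designMat X l).mulVec v = ∑ x ∈ X, l x * (x ⬝ᵥ u) * (x ⬝ᵥ v) := by
  rw [designMat, sum_mulVec', dotProduct_sum']
  refine Finset.sum_congr rfl fun x _ => ?_
  rw [Matrix.smul_mulVec, dotProduct_smul]
  have : Matrix.vecMulVec x x *ᵥ v = (x ⬝ᵥ v) • x := by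
    ext i
    simp only [Matrix.mulVec, Matrix.vecMulVec_apply, dotProduct, Pi.smul_apply, smul_eq_mul,
      Finset.sum_mul]
    refine Finset.sum_congr rfl fun j _ => by ring
  rw [this, dotProduct_smul, smul_eq_mul, smul_eq_mul, dotProduct_comm x u, dotProduct_comm x v]
  ring


lemma quadInv_eq_sum {d : ℕ} (X : Finset (Fin d → ℝ)) (l : (Fin d → ℝ) → ℝ)
    (hdet : IsUnit (designMat X l).det) (y : Fin d → ℝ) :
    quadInv X l y = ∑ x ∈ X, l x * (x ⬝ᵥ ((designMat X l)⁻¹ *ᵥ y)) ^ 2 := by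
  set z := (designMat X l)⁻¹ *ᵥ y with hzdef
  have hz : designMat X l *ᵥ z = y := by
    rw [hzdef, Matrix.mulVec_mulVec, Matrix.mul_nonsing_inv _ hdet, Matrix.one_mulVec]
  calc quadInv X l y = y ⬝ᵥ z := rfl
    _ = z ⬝ᵥ y := dotProduct_comm _ _
    _ = z ⬝ᵥ (designMat X l *ᵥ z) := by rw [hz]
    _ = ∑ x ∈ X, l x * (x ⬝ᵥ z) * (x ⬝ᵥ z) := bilin_designMat X l z z
    _ = ∑ x ∈ X, l x * (x ⬝ᵥ z) ^ 2 := by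
        refine Finset.sum_congr rfl fun x _ => by ring

lemma quadInv_nonneg {d : ℕ} (X : Finset (Fin d → ℝ)) (l : (Fin d → ℝ) → ℝ)
    (hl : l ∈ designSimplex X) (hdet : IsUnit (designMat X l).det) (y : Fin d → ℝ) :
    0 ≤ quadInv X l y := by
  rw [quadInv_eq_sum X l hdet y]
  exact Finset.sum_nonneg fun x _ => mul_nonneg (hl.1 x) (sq_nonneg _)

lemma quadInv_zero' {d : ℕ} (X : Finset (Fin d → ℝ)) (l : (Fin d → ℝ) → ℝ) :
    quadInv X l 0 = 0 := by
  simp [quadInv]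

lemma quadInv_sub_le {d : ℕ} (X : Finset (Fin d → ℝ)) (l : (Fin d → ℝ) → ℝ)
    (hl : l ∈ designSimplex X) (hdet : IsUnit (designMat X l).det) (u v : Fin d → ℝ) :
    quadInv X l (u - v) ≤ 2 * quadInv X l u + 2 * quadInv X l v := by
  rw [quadInv_eq_sum X l hdet, quadInv_eq_sum X l hdet, quadInv_eq_sum X l hdet,
    Matrix.mulVec_sub, Finset.mul_sum, Finset.mul_sum, ← Finset.sum_add_distrib]
  refine Finset.sum_le_sum fun x hx => ?_
  rw [dotProduct_sub]
  have h0 := hl.1 x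
  have hineq : (x ⬝ᵥ ((designMat X l)⁻¹ *ᵥ u) - x ⬝ᵥ ((designMat X l)⁻¹ *ᵥ v)) ^ 2
      ≤ 2 * (x ⬝ᵥ ((designMat X l)⁻¹ *ᵥ u)) ^ 2 + 2 * (x ⬝ᵥ ((designMat X l)⁻¹ *ᵥ v)) ^ 2 := by
    nlinarith [sq_nonneg (x ⬝ᵥ ((designMat X l)⁻¹ *ᵥ u) + x ⬝ᵥ ((designMat X l)⁻¹ *ᵥ v))]
  nlinarith [mul_le_mul_of_nonneg_left hineq h0]

lemma quadInv_norm_le {d : ℕ} (X : Finset (Fin d → ℝ)) (l : (Fin d → ℝ) → ℝ)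
    (hl : l ∈ designSimplex X) (hn : ∀ x ∈ X, x ⬝ᵥ x ≤ 1)
    (hdet : IsUnit (designMat X l).det) (y : Fin d → ℝ) :
    y ⬝ᵥ y ≤ quadInv X l y := by
  set A := designMat X l with hA
  set z := A⁻¹ *ᵥ y with hzdef
  have hz : A *ᵥ z = y := by
    rw [hzdef, Matrix.mulVec_mulVec, Matrix.mul_nonsing_inv _ hdet, Matrix.one_mulVec]
  have hq : quadInv X l y = ∑ x ∈ X, l x * (x ⬝ᵥ z) ^ 2 := quadInv_eq_sum X l hdet y
  have hn' : y ⬝ᵥ y = ∑ x ∈ X, l x * (x ⬝ᵥ y) * (x ⬝ᵥ z) := by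
    calc y ⬝ᵥ y = y ⬝ᵥ (A *ᵥ z) := by rw [hz]
      _ = ∑ x ∈ X, l x * (x ⬝ᵥ y) * (x ⬝ᵥ z) := bilin_designMat X l y z
  have hyy : (0:ℝ) ≤ y ⬝ᵥ y := Finset.sum_nonneg fun i _ => mul_self_nonneg _
  have hAle : ∑ x ∈ X, l x * (x ⬝ᵥ y) ^ 2 ≤ y ⬝ᵥ y := by
    calc ∑ x ∈ X, l x * (x ⬝ᵥ y) ^ 2 ≤ ∑ x ∈ X, l x * (y ⬝ᵥ y) := by
          refine Finset.sum_le_sum fun x hx => ?_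
          refine mul_le_mul_of_nonneg_left ?_ (hl.1 x)
          have hcs := Finset.sum_mul_sq_le_sq_mul_sq Finset.univ x y
          have h1 : ∑ i, x i ^ 2 = x ⬝ᵥ x := by simp [dotProduct, sq]
          have h2 : ∑ i, y i ^ 2 = y ⬝ᵥ y := by simp [dotProduct, sq]
          have h3 : (x ⬝ᵥ y) ^ 2 ≤ (x ⬝ᵥ x) * (y ⬝ᵥ y) := by
            rw [← h1, ← h2]; exact hcs
          have h4 : (x ⬝ᵥ x) * (y ⬝ᵥ y) ≤ 1 * (y ⬝ᵥ y) :=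
            mul_le_mul_of_nonneg_right (hn x hx) hyy
          linarith
      _ = y ⬝ᵥ y := by rw [← Finset.sum_mul, hl.2, one_mul]
  have hkey : (y ⬝ᵥ y) ^ 2 ≤ (∑ x ∈ X, l x * (x ⬝ᵥ y) ^ 2) * quadInv X l y := by
    rw [hn', hq]
    have hcs := Finset.sum_mul_sq_le_sq_mul_sq X (fun x => Real.sqrt (l x) * (x ⬝ᵥ y))
      (fun x => Real.sqrt (l x) * (x ⬝ᵥ z))
    have e1 : ∑ x ∈ X, (Real.sqrt (l x) * (x ⬝ᵥ y)) * (Real.sqrt (l x) * (x ⬝ᵥ z))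
        = ∑ x ∈ X, l x * (x ⬝ᵥ y) * (x ⬝ᵥ z) := by
      refine Finset.sum_congr rfl fun x _ => ?_
      have : Real.sqrt (l x) * (x ⬝ᵥ y) * (Real.sqrt (l x) * (x ⬝ᵥ z))
          = Real.sqrt (l x) * Real.sqrt (l x) * ((x ⬝ᵥ y) * (x ⬝ᵥ z)) := by ring
      rw [this, Real.mul_self_sqrt (hl.1 x)]; ring
    have e2 : ∑ x ∈ X, (Real.sqrt (l x) * (x ⬝ᵥ y)) ^ 2 = ∑ x ∈ X, l x * (x ⬝ᵥ y) ^ 2 := by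
      refine Finset.sum_congr rfl fun x _ => ?_
      rw [mul_pow, Real.sq_sqrt (hl.1 x)]
    have e3 : ∑ x ∈ X, (Real.sqrt (l x) * (x ⬝ᵥ z)) ^ 2 = ∑ x ∈ X, l x * (x ⬝ᵥ z) ^ 2 := by
      refine Finset.sum_congr rfl fun x _ => ?_
      rw [mul_pow, Real.sq_sqrt (hl.1 x)]
    rw [e1, e2, e3] at hcs
    exact hcs
  have hq0 : 0 ≤ quadInv X l y := quadInv_nonneg X l hl hdet y
  have hle : (y ⬝ᵥ y) ^ 2 ≤ (y ⬝ᵥ y) * quadInv X l y :=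
    hkey.trans (mul_le_mul_of_nonneg_right hAle hq0)
  rcases eq_or_lt_of_le hyy with h | h
  · rw [← h]; exact hq0
  · nlinarith

lemma rho_nonneg {d : ℕ} (X : Finset (Fin d → ℝ)) (A : Set (Fin d → ℝ)) : 0 ≤ rho X A := by
  refine Real.sInf_nonneg fun v hv => ?_
  obtain ⟨l, hl, hdet, rfl⟩ := hv
  exact Real.sSup_nonneg' ⟨0, Set.mem_insert _ _, le_rfl⟩

lemma rho_bddBelow {d : ℕ} (X : Finset (Fin d → ℝ)) (A : Set (Fin d → ℝ)) :
    BddBelow {v | ∃ l ∈ designSimplex X, IsUnit (designMat X l).det ∧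
      v = sSup (insert 0 (quadInv X l '' A))} := by
  refine ⟨0, fun v hv => ?_⟩
  obtain ⟨l, hl, hdet, rfl⟩ := hv
  exact Real.sSup_nonneg' ⟨0, Set.mem_insert _ _, le_rfl⟩

lemma rho_le_of {d : ℕ} (X : Finset (Fin d → ℝ)) (A : Set (Fin d → ℝ))
    (l : (Fin d → ℝ) → ℝ) (hl : l ∈ designSimplex X) (hdet : IsUnit (designMat X l).det) :
    rho X A ≤ sSup (insert 0 (quadInv X l '' A)) :=
  csInf_le (rho_bddBelow X A) ⟨l, hl, hdet, rfl⟩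

lemma rho_mono {d : ℕ} (X : Finset (Fin d → ℝ)) {A B : Set (Fin d → ℝ)}
    (hex : ∃ l ∈ designSimplex X, IsUnit (designMat X l).det)
    (hB : B.Finite) (hAB : A ⊆ B) : rho X A ≤ rho X B := by
  obtain ⟨l₀, hl₀, hdet₀⟩ := hex
  refine le_csInf ⟨_, l₀, hl₀, hdet₀, rfl⟩ ?_
  rintro b ⟨l, hl, hdet, rfl⟩
  refine (rho_le_of X A l hl hdet).trans (csSup_le_csSup ?_ ⟨0, Set.mem_insert _ _⟩ ?_)
  · exact ((hB.image _).insert 0).bddAbove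
  · exact Set.insert_subset_insert (Set.image_mono hAB)

lemma rho_lb {d : ℕ} (X : Finset (Fin d → ℝ)) {A : Set (Fin d → ℝ)}
    (hex : ∃ l ∈ designSimplex X, IsUnit (designMat X l).det)
    (hn : ∀ x ∈ X, x ⬝ᵥ x ≤ 1) (hA : A.Finite) {y : Fin d → ℝ} (hy : y ∈ A) :
    y ⬝ᵥ y ≤ rho X A := by
  obtain ⟨l₀, hl₀, hdet₀⟩ := hex
  refine le_csInf ⟨_, l₀, hl₀, hdet₀, rfl⟩ ?_
  rintro b ⟨l, hl, hdet, rfl⟩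
  exact (quadInv_norm_le X l hl hn hdet y).trans
    (le_csSup ((hA.image _).insert 0).bddAbove (Set.mem_insert_of_mem _ ⟨y, hy, rfl⟩))

lemma exists_design {d : ℕ} (X : Finset (Fin d → ℝ))
    (hspan : Submodule.span ℝ (X : Set (Fin d → ℝ)) = ⊤) (hne : X.Nonempty) :
    ∃ l ∈ designSimplex X, IsUnit (designMat X l).det := by
  classical
  set l : (Fin d → ℝ) → ℝ := fun x => if x ∈ X then ((X.card : ℝ))⁻¹ else 0 with hldef
  have hcard : (0:ℝ) < X.card := by exact_mod_cast hne.card_pos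
  have hmem : l ∈ designSimplex X := by
    constructor
    · intro x
      rw [hldef]
      dsimp only
      split
      · positivity
      · exact le_rfl
    · calc ∑ x ∈ X, l x = ∑ x ∈ X, ((X.card : ℝ))⁻¹ :=
            Finset.sum_congr rfl fun x hx => by simp [hldef, hx]
        _ = 1 := by rw [Finset.sum_const, nsmul_eq_mul]; field_simp
  refine ⟨l, hmem, ?_⟩
  have hherm : (designMat X l).IsHermitian := by
    ext i j
    simp only [designMat, Matrix.conjTranspose_apply, Matrix.sum_apply, Matrix.smul_apply,
      Matrix.vecMulVec_apply, smul_eq_mul, star_trivial]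
    exact Finset.sum_congr rfl fun x _ => by ring
  have hpd : (designMat X l).PosDef := by
    refine Matrix.posDef_iff_dotProduct_mulVec.mpr ⟨hherm, fun v hv => ?_⟩
    have hsv : star v = v := funext fun i => star_trivial _
    rw [hsv, bilin_designMat]
    have hx0 : ∃ x ∈ X, x ⬝ᵥ v ≠ 0 := by
      by_contra hcon
      push_neg at hcon
      set φ : (Fin d → ℝ) →ₗ[ℝ] ℝ :=
        { toFun := fun w => w ⬝ᵥ v
          map_add' := fun a b => add_dotProduct a b v
          map_smul' := fun c a => smul_dotProduct c a v } with hφ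
      have hsub : (X : Set (Fin d → ℝ)) ⊆ (LinearMap.ker φ : Set _) := fun x hx =>
        LinearMap.mem_ker.mpr (hcon x hx)
      have hle : Submodule.span ℝ (X : Set (Fin d → ℝ)) ≤ LinearMap.ker φ :=
        Submodule.span_le.mpr hsub
      rw [hspan] at hle
      have hφv : φ v = 0 := hle Submodule.mem_top
      have : v ⬝ᵥ v = 0 := hφv
      exact hv (dotProduct_self_eq_zero.mp this)
    obtain ⟨x₀, hx₀X, hx₀⟩ := hx0
    refine Finset.sum_pos' (fun x hx => ?_) ⟨x₀, hx₀X, ?_⟩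
    · rw [mul_assoc]
      exact mul_nonneg (hmem.1 x) (mul_self_nonneg _)
    · have hlx : l x₀ = ((X.card : ℝ))⁻¹ := by simp [hldef, hx₀X]
      have hpos : 0 < l x₀ := by rw [hlx]; positivity
      rw [mul_assoc]
      exact mul_pos hpos (mul_self_pos.mpr hx₀)
  exact isUnit_iff_ne_zero.mpr hpd.det_pos.ne'

lemma rho_yset_le_psi {d : ℕ} (X : Finset (Fin d → ℝ)) (θstar xstar : Fin d → ℝ)
    (hex : ∃ l ∈ designSimplex X, IsUnit (designMat X l).det)
    {S : Set (Fin d → ℝ)} (hSX : S ⊆ ↑X) {c : ℝ} (hc : 0 < c)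
    (hΔne : ∀ x ∈ S, x ≠ xstar → θstar ⬝ᵥ (xstar - x) ≠ 0)
    (hgapS : ∀ x ∈ S, x ≠ xstar → (θstar ⬝ᵥ (xstar - x)) ^ 2 ≤ c) :
    rho X (Yset S) ≤ 4 * c * psiStar X θstar xstar := by
  obtain ⟨l₀, hl₀, hdet₀⟩ := hex
  have key : ∀ ε : ℝ, 0 < ε → rho X (Yset S) ≤ 4 * c * psiStar X θstar xstar + ε := by
    intro ε hε
    have hε' : 0 < ε / (4 * c) := by positivity
    obtain ⟨v, hvΨ, hvlt⟩ := Real.lt_sInf_add_pos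
      (s := {v | ∃ l ∈ designSimplex X, IsUnit (designMat X l).det ∧
        v = sSup (insert 0
          ((fun x => quadInv X l (x - xstar) / (θstar ⬝ᵥ (xstar - x)) ^ 2) ''
            ((X : Set (Fin d → ℝ)) \ {xstar})))}) ⟨_, l₀, hl₀, hdet₀, rfl⟩ hε'
    obtain ⟨l, hl, hdet, hveq⟩ := hvΨ
    have hvlt' : v < psiStar X θstar xstar + ε / (4 * c) := hvlt
    have hv0 : 0 ≤ v := hveq ▸ Real.sSup_nonneg' ⟨0, Set.mem_insert _ _, le_rfl⟩
    have hbdd : BddAbove (insert 0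
        ((fun x => quadInv X l (x - xstar) / (θstar ⬝ᵥ (xstar - x)) ^ 2) ''
          ((X : Set (Fin d → ℝ)) \ {xstar}))) :=
      (((X.finite_toSet.diff).image _).insert 0).bddAbove
    have hpt : ∀ x ∈ S, quadInv X l (x - xstar) ≤ c * v := by
      intro x hxS
      by_cases hxx : x = xstar
      · rw [hxx, sub_self, quadInv_zero']
        exact mul_nonneg hc.le hv0
      · have hmemv : quadInv X l (x - xstar) / (θstar ⬝ᵥ (xstar - x)) ^ 2 ≤ v := by
          rw [hveq]
          exact le_csSup hbdd (Set.mem_insert_of_mem _ ⟨x, ⟨hSX hxS, hxx⟩, rfl⟩)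
        have hΔ2 : 0 < (θstar ⬝ᵥ (xstar - x)) ^ 2 := by
          have := hΔne x hxS hxx
          positivity
        calc quadInv X l (x - xstar)
            = (quadInv X l (x - xstar) / (θstar ⬝ᵥ (xstar - x)) ^ 2) *
              (θstar ⬝ᵥ (xstar - x)) ^ 2 := (div_mul_cancel₀ _ hΔ2.ne').symm
          _ ≤ v * c := mul_le_mul hmemv (hgapS x hxS hxx) (sq_nonneg _) hv0
          _ = c * v := mul_comm _ _
    have hsup : sSup (insert 0 (quadInv X l '' Yset S)) ≤ 4 * c * v := by
      refine Real.sSup_le ?_ (by positivity)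
      intro z hz
      rcases Set.mem_insert_iff.mp hz with rfl | ⟨y, hy, rfl⟩
      · positivity
      · obtain ⟨x, hxS, x', hx'S, hne', rfl⟩ := hy
        have hd : x - x' = (x - xstar) - (x' - xstar) := by abel
        rw [hd]
        have h1 := hpt x hxS
        have h2 := hpt x' hx'S
        have h3 := quadInv_sub_le X l hl hdet (x - xstar) (x' - xstar)
        linarith
    calc rho X (Yset S) ≤ sSup (insert 0 (quadInv X l '' Yset S)) := rho_le_of X _ l hl hdet
      _ ≤ 4 * c * v := hsup
      _ ≤ 4 * c * (psiStar X θstar xstar + ε / (4 * c)) :=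
          mul_le_mul_of_nonneg_left hvlt'.le (by positivity)
      _ = 4 * c * psiStar X θstar xstar + ε := by field_simp
  by_contra hcon
  push_neg at hcon
  have := key ((rho X (Yset S) - 4 * c * psiStar X θstar xstar) / 2) (by linarith)
  linarith

lemma Yset_finite {d : ℕ} {S : Set (Fin d → ℝ)} (hS : S.Finite) : (Yset S).Finite := by
  refine Set.Finite.subset (hS.image2 (fun x x' => x - x') hS) ?_
  rintro y ⟨x, hx, x', hx', _, rfl⟩
  exact Set.mem_image2_of_mem hx hx'

lemma dps_pos {d : ℕ} {v : Fin d → ℝ} (hv : v ≠ 0) : 0 < v ⬝ᵥ v := by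
  rcases eq_or_lt_of_le (Finset.sum_nonneg fun i (_ : i ∈ Finset.univ) => mul_self_nonneg (v i)) with h | h
  · exact absurd (dotProduct_self_eq_zero.mp h.symm) hv
  · exact h


/-!
Definition 4.2 recursion as in the paper; additionally `Δ_x ≤ 15/2` for all `x ∈ X`.
Let `α` be the number of indices `r ∈ {1, …, R-1}` with `U r ≠ U (r+1)`.

STATEMENT 14 (batch-complexity bound of Theorem 4.1):
`R ≤ α + 2 + log_{5/4}(900 log₂(15/Δ₂) ψ* / ρ(𝒴*(X)))`.
-/
theorem linear_batch_complexity_bound {d : ℕ} (X : Finset (Fin d → ℝ))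
    (θstar xstar : Fin d → ℝ)
    (hspan : Submodule.span ℝ (X : Set (Fin d → ℝ)) = ⊤)
    (hnorm : ∀ x ∈ X, x ⬝ᵥ x ≤ 1)
    (hxstar : xstar ∈ X)
    (hmax : ∀ x ∈ X, x ≠ xstar → θstar ⬝ᵥ x < θstar ⬝ᵥ xstar)
    (hgap : ∀ x ∈ X, θstar ⬝ᵥ (xstar - x) ≤ 15 / 2)
    (Δ₂ : ℝ)
    (hΔ₂mem : ∃ x ∈ X, x ≠ xstar ∧ Δ₂ = θstar ⬝ᵥ (xstar - x))
    (hΔ₂min : ∀ x ∈ X, x ≠ xstar → Δ₂ ≤ θstar ⬝ᵥ (xstar - x))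
    (Tbar : ℕ → ℕ) (Lbar Lhat : ℕ → ℝ) (U : ℕ → Finset (Fin d → ℝ)) (H : ℕ → ℝ)
    (R : ℕ) (hR1 : 1 ≤ R)
    (hT1 : Tbar 1 = 1)
    (hLbar : ∀ r, Lbar r = 4 ^ Tbar r)
    (hU : ∀ r, U r = X.filter (fun x => 15 / Real.sqrt (Lbar r) < θstar ⬝ᵥ (xstar - x)))
    (hH : ∀ r, H r = ∑ t ∈ Finset.Icc 1 (Tbar r), (4 : ℝ) ^ t *
      rho X (Yset ((X : Set (Fin d → ℝ)) \
        {x | x ∈ U r ∧ 15 / 2 ^ t < θstar ⬝ᵥ (xstar - x)})))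
    (hLhat : ∀ r, 1 ≤ r → r < R →
      Lhat (r + 1) = 4 * Lbar r + H r / rho X (Yset ((X : Set (Fin d → ℝ)) \ ↑(U r))))
    (hTsucc : ∀ r, 1 ≤ r → r < R →
      (4 : ℝ) ^ Tbar (r + 1) ≤ Lhat (r + 1) ∧ Lhat (r + 1) < (4 : ℝ) ^ (Tbar (r + 1) + 1))
    (hRmem : U R = X.erase xstar)
    (hRleast : ∀ r, 1 ≤ r → r < R → U r ≠ X.erase xstar)
    (α : ℕ)
    (hα : α = ((Finset.Icc 1 (R - 1)).filter (fun r => U r ≠ U (r + 1))).card) :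
    (R : ℝ) ≤ α + 2 + Real.logb (5 / 4)
      (900 * Real.logb 2 (15 / Δ₂) * psiStar X θstar xstar /
        rho X (YstarSet xstar (X : Set (Fin d → ℝ)))) := by
  classical
  obtain ⟨x₂, hx₂X, hx₂ne, hx₂eq⟩ := hΔ₂mem
  have hXne : X.Nonempty := ⟨xstar, hxstar⟩
  have hex : ∃ l ∈ designSimplex X, IsUnit (designMat X l).det := exists_design X hspan hXne
  have hgap0 : ∀ x ∈ X, x ≠ xstar → 0 < θstar ⬝ᵥ (xstar - x) := by
    intro x hx hne
    have h1 := hmax x hx hne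
    rw [dotProduct_sub]
    linarith
  have hΔ₂pos : 0 < Δ₂ := hx₂eq ▸ hgap0 x₂ hx₂X hx₂ne
  have hΔstar : θstar ⬝ᵥ (xstar - xstar) = 0 := by rw [sub_self, dotProduct_zero]
  have hthr : ∀ s t : ℕ, s ≤ t → (15:ℝ) / 2 ^ t ≤ 15 / 2 ^ s := by
    intro s t hst
    have h1 : (0:ℝ) < 2 ^ s := by positivity
    exact div_le_div_of_nonneg_left (by norm_num) h1 (pow_le_pow_right₀ (by norm_num) hst)
  have hsqrt : ∀ r, 15 / Real.sqrt (Lbar r) = 15 / (2:ℝ) ^ (Tbar r) := by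
    intro r
    rw [hLbar r]
    congr 1
    have h4 : ((4:ℝ)) ^ (Tbar r) = ((2:ℝ) ^ (Tbar r)) ^ 2 := by
      rw [← pow_mul, mul_comm, pow_mul]
      norm_num
    rw [h4, Real.sqrt_sq (by positivity)]
  have hUmem : ∀ r x, x ∈ U r ↔ (x ∈ X ∧ 15 / (2:ℝ) ^ (Tbar r) < θstar ⬝ᵥ (xstar - x)) := by
    intro r x
    rw [hU r, Finset.mem_filter, hsqrt r]
  set W : ℕ → Set (Fin d → ℝ) :=
    fun t => {x : Fin d → ℝ | x ∈ X ∧ 15 / (2:ℝ) ^ t < θstar ⬝ᵥ (xstar - x)} with hWdef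
  set a : ℕ → ℝ := fun t => rho X (Yset ((X : Set (Fin d → ℝ)) \ W t)) with hadef
  have ha0 : ∀ t, 0 ≤ a t := fun t => rho_nonneg X _
  have hWmono : ∀ s t : ℕ, s ≤ t → W s ⊆ W t := by
    intro s t hst x hx
    exact ⟨hx.1, lt_of_le_of_lt (hthr s t hst) hx.2⟩
  have hWU : ∀ r, ((U r : Set (Fin d → ℝ))) = W (Tbar r) := by
    intro r
    ext x
    rw [Finset.mem_coe, hUmem r x]
    rfl
  have hHa : ∀ r, H r = ∑ t ∈ Finset.Icc 1 (Tbar r), (4:ℝ) ^ t * a t := by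
    intro r
    rw [hH r]
    refine Finset.sum_congr rfl fun t ht => ?_
    have ht' := (Finset.mem_Icc.mp ht).2
    have hset : {x | x ∈ U r ∧ 15 / (2:ℝ) ^ t < θstar ⬝ᵥ (xstar - x)} = W t := by
      ext x
      simp only [Set.mem_setOf_eq, hWdef]
      constructor
      · rintro ⟨hxU, hlt⟩
        exact ⟨((hUmem r x).mp hxU).1, hlt⟩
      · rintro ⟨hxX, hlt⟩
        exact ⟨(hUmem r x).mpr ⟨hxX, lt_of_le_of_lt (hthr t (Tbar r) ht') hlt⟩, hlt⟩
    rw [hset]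
  have hH0 : ∀ r, 0 ≤ H r := by
    intro r
    rw [hHa r]
    exact Finset.sum_nonneg fun t _ => mul_nonneg (by positivity) (ha0 t)
  have hTmono : ∀ r, 1 ≤ r → r < R → Tbar r < Tbar (r + 1) := by
    intro r h1 h2
    have hd0 : 0 ≤ H r / rho X (Yset ((X : Set (Fin d → ℝ)) \ ↑(U r))) :=
      div_nonneg (hH0 r) (rho_nonneg X _)
    have h4 : (4:ℝ) ^ (Tbar r + 1) ≤ Lhat (r+1) := by
      rw [hLhat r h1 h2, hLbar r]
      have he : (4:ℝ) ^ (Tbar r + 1) = 4 * 4 ^ Tbar r := by ring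
      rw [he]
      linarith
    have hlt : (4:ℝ) ^ (Tbar r + 1) < 4 ^ (Tbar (r+1) + 1) :=
      lt_of_le_of_lt h4 (hTsucc r h1 h2).2
    by_contra hcon2
    push_neg at hcon2
    have hle2 : (4:ℝ) ^ (Tbar (r+1) + 1) ≤ 4 ^ (Tbar r + 1) :=
      pow_le_pow_right₀ (by norm_num) (by omega)
    linarith
  have hU1 : U 1 = ∅ := by
    rw [Finset.eq_empty_iff_forall_notMem]
    intro x hx
    have h := (hUmem 1 x).mp hx
    have hle := hgap x h.1
    have hlt := h.2
    rw [hT1, pow_one] at hlt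
    linarith
  have hR2 : 2 ≤ R := by
    by_contra hcon
    have hR1' : R = 1 := by omega
    rw [hR1', hU1] at hRmem
    have : x₂ ∈ X.erase xstar := Finset.mem_erase.mpr ⟨hx₂ne, hx₂X⟩
    rw [← hRmem] at this
    exact Finset.notMem_empty x₂ this
  obtain ⟨m, rfl⟩ : ∃ m, R = m + 2 := ⟨R - 2, by omega⟩
  have hhole : ∀ r, 1 ≤ r → r < m + 2 → ∃ x₀, x₀ ∈ X ∧ x₀ ≠ xstar ∧ x₀ ∉ U r := by
    intro r h1 h2
    have hsub : U r ⊆ X.erase xstar := by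
      intro x hx
      have h := (hUmem r x).mp hx
      refine Finset.mem_erase.mpr ⟨?_, h.1⟩
      intro hxx
      rw [hxx] at h
      have hp : (0:ℝ) < 15 / 2 ^ Tbar r := by positivity
      rw [hΔstar] at h
      linarith [h.2]
    by_contra hall
    push_neg at hall
    refine hRleast r h1 h2 (Finset.Subset.antisymm hsub fun x hx => ?_)
    exact hall x (Finset.mem_erase.mp hx).2 (Finset.mem_erase.mp hx).1
  have hxstar_notW : ∀ t, xstar ∉ W t := by
    intro t hx
    have hp : (0:ℝ) < 15 / 2 ^ t := by positivity
    have := hx.2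
    rw [hΔstar] at this
    linarith
  have haTpos : ∀ r, 1 ≤ r → r < m + 2 → 0 < a (Tbar r) := by
    intro r h1 h2
    obtain ⟨x₀, hx₀X, hx₀ne, hx₀nU⟩ := hhole r h1 h2
    have hx₀nW : x₀ ∉ W (Tbar r) := by
      intro h
      exact hx₀nU ((hUmem r x₀).mpr h)
    have hy : xstar - x₀ ∈ Yset ((X : Set (Fin d → ℝ)) \ W (Tbar r)) :=
      ⟨xstar, ⟨hxstar, hxstar_notW _⟩, x₀, ⟨hx₀X, hx₀nW⟩, Ne.symm hx₀ne, rfl⟩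
    have hfin : ((X : Set (Fin d → ℝ)) \ W (Tbar r)).Finite := X.finite_toSet.diff
    have hlb := rho_lb X hex hnorm (Yset_finite hfin) hy
    have hne0 : xstar - x₀ ≠ 0 := sub_ne_zero_of_ne (Ne.symm hx₀ne)
    exact lt_of_lt_of_le (dps_pos hne0) hlb
  have hstag : ∀ r, 1 ≤ r → r ≤ m → U r = U (r+1) → 5/4 * H r ≤ H (r+1) := by
    intro r h1 hm hUeq
    have h2 : r < m + 2 := by omega
    have hT := hTmono r h1 h2
    have hWeqTT : W (Tbar r) = W (Tbar (r+1)) := by rw [← hWU r, ← hWU (r+1), hUeq]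
    have hWconst : ∀ t, Tbar r ≤ t → t ≤ Tbar (r+1) → W t = W (Tbar r) := by
      intro t htl htu
      refine subset_antisymm ?_ (hWmono _ _ htl)
      rw [hWeqTT]
      exact hWmono _ _ htu
    have haconst : ∀ t, t ∈ Finset.Ioc (Tbar r) (Tbar (r+1)) → a t = a (Tbar r) := by
      intro t ht
      obtain ⟨htl, htu⟩ := Finset.mem_Ioc.mp ht
      simp only [hadef]
      rw [hWconst t htl.le htu]
    have hdisj : Disjoint (Finset.Icc 1 (Tbar r)) (Finset.Ioc (Tbar r) (Tbar (r+1))) := by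
      rw [Finset.disjoint_left]
      intro t ht1 ht2
      rw [Finset.mem_Icc] at ht1
      rw [Finset.mem_Ioc] at ht2
      omega
    have hunion : Finset.Icc 1 (Tbar (r+1)) =
        Finset.Icc 1 (Tbar r) ∪ Finset.Ioc (Tbar r) (Tbar (r+1)) := by
      ext t
      simp only [Finset.mem_Icc, Finset.mem_union, Finset.mem_Ioc]
      omega
    have hsplit : H (r+1) = H r + ∑ t ∈ Finset.Ioc (Tbar r) (Tbar (r+1)), (4:ℝ)^t * a t := by
      rw [hHa (r+1), hHa r, hunion, Finset.sum_union hdisj]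
    have hmem' : Tbar (r+1) ∈ Finset.Ioc (Tbar r) (Tbar (r+1)) := Finset.mem_Ioc.mpr ⟨hT, le_rfl⟩
    have hterm : (4:ℝ)^(Tbar (r+1)) * a (Tbar r) ≤
        ∑ t ∈ Finset.Ioc (Tbar r) (Tbar (r+1)), (4:ℝ)^t * a t := by
      have hs : (4:ℝ)^(Tbar (r+1)) * a (Tbar (r+1)) ≤
          ∑ t ∈ Finset.Ioc (Tbar r) (Tbar (r+1)), (4:ℝ)^t * a t :=
        Finset.single_le_sum (f := fun t => (4:ℝ)^t * a t)
          (fun t _ => mul_nonneg (by positivity) (ha0 t)) hmem'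
      rw [haconst _ hmem'] at hs
      exact hs
    have hρ := haTpos r h1 h2
    have hLh : Lhat (r+1) / 4 ≤ (4:ℝ) ^ (Tbar (r+1)) := by
      have hx := (hTsucc r h1 h2).2
      rw [pow_succ] at hx
      linarith
    have hLhat' : Lhat (r+1) = 4 * (4:ℝ)^(Tbar r) + H r / a (Tbar r) := by
      rw [hLhat r h1 h2, hLbar r, hWU r]
    have hkey : a (Tbar r) * ((4:ℝ)^(Tbar r)) + H r / 4 ≤ (4:ℝ)^(Tbar (r+1)) * a (Tbar r) := by
      have h1' : Lhat (r+1) / 4 * a (Tbar r) ≤ (4:ℝ)^(Tbar (r+1)) * a (Tbar r) :=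
        mul_le_mul_of_nonneg_right hLh (ha0 _)
      have h2' : Lhat (r+1) / 4 * a (Tbar r) = a (Tbar r) * (4:ℝ)^(Tbar r) + H r / 4 := by
        rw [hLhat']
        field_simp
      linarith
    have hnn : 0 ≤ a (Tbar r) * ((4:ℝ)^(Tbar r)) := mul_nonneg (ha0 _) (by positivity)
    rw [hsplit]
    linarith
  have hmono : ∀ r, 1 ≤ r → r ≤ m → H r ≤ H (r+1) := by
    intro r h1 hm
    have h2 : r < m + 2 := by omega
    have hT := (hTmono r h1 h2).le
    rw [hHa r, hHa (r+1)]
    refine Finset.sum_le_sum_of_subset_of_nonneg (Finset.Icc_subset_Icc_right hT) ?_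
    intro t _ _
    exact mul_nonneg (by positivity) (ha0 t)
  have hW1 : W 1 = ∅ := by
    rw [Set.eq_empty_iff_forall_notMem]
    rintro x ⟨hxX, hlt⟩
    rw [pow_one] at hlt
    linarith [hgap x hxX]
  have hH1 : H 1 = 4 * rho X (Yset (X : Set (Fin d → ℝ))) := by
    rw [hHa 1, hT1, Finset.Icc_self, Finset.sum_singleton]
    simp only [hadef]
    rw [hW1, Set.diff_empty, pow_one]
  have hρX : 0 < rho X (Yset (X : Set (Fin d → ℝ))) := by
    have hy : xstar - x₂ ∈ Yset (X : Set (Fin d → ℝ)) :=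
      ⟨xstar, hxstar, x₂, hx₂X, Ne.symm hx₂ne, rfl⟩
    have hlb := rho_lb X hex hnorm (Yset_finite X.finite_toSet) hy
    exact lt_of_lt_of_le (dps_pos (sub_ne_zero_of_ne (Ne.symm hx₂ne))) hlb
  have key : ∀ j : ℕ, j ≤ m →
      ((5:ℝ)/4) ^ (((Finset.Icc 1 j).filter (fun i => U i = U (i+1))).card) * H 1 ≤ H (j+1) := by
    intro j
    induction j with
    | zero =>
      intro _
      simp only [show Finset.Icc 1 0 = (∅ : Finset ℕ) from rfl, Finset.filter_empty,
        Finset.card_empty, pow_zero, one_mul]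
      exact le_rfl
    | succ n ih =>
      intro hnm
      have hn : n ≤ m := by omega
      have ihn := ih hn
      have hnotmem : n + 1 ∉ Finset.Icc 1 n := by
        rw [Finset.mem_Icc]
        omega
      have hIcc : Finset.Icc 1 (n+1) = insert (n+1) (Finset.Icc 1 n) := by
        ext t
        simp only [Finset.mem_Icc, Finset.mem_insert]
        omega
      by_cases hc : U (n+1) = U (n+2)
      · rw [hIcc, Finset.filter_insert, if_pos hc,
          Finset.card_insert_of_notMem (fun h => hnotmem (Finset.mem_of_mem_filter _ h)),
          pow_succ]
        have hstep := hstag (n+1) (by omega) (by omega) hc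
        have h5 : ((5:ℝ)/4) ^ (((Finset.Icc 1 n).filter (fun i => U i = U (i+1))).card) * H 1 ≤
            H (n+1) := ihn
        calc ((5:ℝ)/4) ^ (((Finset.Icc 1 n).filter (fun i => U i = U (i+1))).card) * (5/4) * H 1
            = 5/4 * (((5:ℝ)/4) ^ (((Finset.Icc 1 n).filter (fun i => U i = U (i+1))).card) * H 1) := by
              ring
          _ ≤ 5/4 * H (n+1) := by linarith
          _ ≤ H (n+2) := hstep
      · rw [hIcc, Finset.filter_insert, if_neg hc]
        exact le_trans ihn (hmono (n+1) (by omega) (by omega))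
  have hfinal := key m le_rfl
  set s := ((Finset.Icc 1 m).filter (fun i => U i = U (i+1))).card with hsdef
  set Lg := Real.logb 2 (15 / Δ₂) with hLgdef
  have hψ0 : 0 ≤ psiStar X θstar xstar := by
    refine Real.sInf_nonneg fun v hv => ?_
    obtain ⟨l, hl, hdet, rfl⟩ := hv
    exact Real.sSup_nonneg' ⟨0, Set.mem_insert _ _, le_rfl⟩
  have hTm1 : ((Tbar (m+1) : ℝ)) ≤ Lg := by
    obtain ⟨x₀, hx₀X, hx₀ne, hx₀nU⟩ := hhole (m+1) (by omega) (by omega)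
    have hΔx₀ : Δ₂ ≤ θstar ⬝ᵥ (xstar - x₀) := hΔ₂min x₀ hx₀X hx₀ne
    have hle : θstar ⬝ᵥ (xstar - x₀) ≤ 15 / 2 ^ (Tbar (m+1)) := by
      by_contra hlt
      push_neg at hlt
      exact hx₀nU ((hUmem (m+1) x₀).mpr ⟨hx₀X, hlt⟩)
    have h2p : (0:ℝ) < 2 ^ (Tbar (m+1)) := by positivity
    have h2T : (2:ℝ) ^ (Tbar (m+1)) ≤ 15 / Δ₂ := by
      rw [le_div_iff₀ hΔ₂pos]
      have := (le_div_iff₀ h2p).mp (hΔx₀.trans hle)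
      linarith
    have hbb : (1:ℝ) < 2 := by norm_num
    calc ((Tbar (m+1) : ℝ)) = Real.logb 2 ((2:ℝ) ^ (Tbar (m+1))) := by
          rw [Real.logb_pow, Real.logb_self_eq_one hbb, mul_one]
      _ ≤ Lg := Real.logb_le_logb_of_le hbb h2p h2T
  have hHub : H (m+1) ≤ 900 * Lg * psiStar X θstar xstar := by
    rw [hHa (m+1)]
    have hterm : ∀ t ∈ Finset.Icc 1 (Tbar (m+1)),
        (4:ℝ)^t * a t ≤ 900 * psiStar X θstar xstar := by
      intro t ht
      have hc : (0:ℝ) < (15 / 2^t)^2 := by positivity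
      have hrle : a t ≤ 4 * ((15:ℝ)/2^t)^2 * psiStar X θstar xstar := by
        simp only [hadef]
        refine rho_yset_le_psi X θstar xstar hex Set.diff_subset hc ?_ ?_
        · intro x hx hne
          exact (hgap0 x hx.1 hne).ne'
        · intro x hx hne
          have hnW : x ∉ W t := hx.2
          have hxX : x ∈ X := hx.1
          have hnlt : ¬ (15 / (2:ℝ)^t < θstar ⬝ᵥ (xstar - x)) := fun h => hnW ⟨hxX, h⟩
          push_neg at hnlt
          exact pow_le_pow_left₀ (hgap0 x hxX hne).le hnlt 2
      have h2 : ((2:ℝ)^t)^2 = 4^t := by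
        rw [← pow_mul, mul_comm, pow_mul]
        norm_num
      have h4t : (0:ℝ) < 4^t := by positivity
      calc (4:ℝ)^t * a t ≤ (4:ℝ)^t * (4 * ((15:ℝ)/2^t)^2 * psiStar X θstar xstar) :=
            mul_le_mul_of_nonneg_left hrle (by positivity)
        _ = 900 * psiStar X θstar xstar := by
            have h15 : ((15:ℝ)/2^t)^2 = 225 / 4^t := by
              rw [div_pow, h2]
              norm_num
            have hr : (4:ℝ)^t * (4 * (225 / 4^t) * psiStar X θstar xstar) =
                (4^t / 4^t) * (900 * psiStar X θstar xstar) := by ring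
            rw [h15, hr, div_self h4t.ne', one_mul]
    calc ∑ t ∈ Finset.Icc 1 (Tbar (m+1)), (4:ℝ)^t * a t
        ≤ ∑ _t ∈ Finset.Icc 1 (Tbar (m+1)), 900 * psiStar X θstar xstar :=
          Finset.sum_le_sum hterm
      _ = (Tbar (m+1)) * (900 * psiStar X θstar xstar) := by
          rw [Finset.sum_const, Nat.card_Icc]
          simp [nsmul_eq_mul]
      _ ≤ Lg * (900 * psiStar X θstar xstar) :=
          mul_le_mul_of_nonneg_right hTm1 (by positivity)
      _ = 900 * Lg * psiStar X θstar xstar := by ring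
  have hρstar : 0 < rho X (YstarSet xstar (X : Set (Fin d → ℝ))) := by
    have hy : xstar - x₂ ∈ YstarSet xstar (X : Set (Fin d → ℝ)) :=
      ⟨x₂, ⟨hx₂X, hx₂ne⟩, rfl⟩
    have hfin : (YstarSet xstar (X : Set (Fin d → ℝ))).Finite :=
      (X.finite_toSet.diff).image _
    have hlb := rho_lb X hex hnorm hfin hy
    exact lt_of_lt_of_le (dps_pos (sub_ne_zero_of_ne (Ne.symm hx₂ne))) hlb
  have hsub' : YstarSet xstar (X : Set (Fin d → ℝ)) ⊆ Yset (X : Set (Fin d → ℝ)) := by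
    rintro y ⟨x, ⟨hxX, hxne⟩, rfl⟩
    exact ⟨xstar, hxstar, x, hxX, Ne.symm hxne, rfl⟩
  have hρm : rho X (YstarSet xstar (X : Set (Fin d → ℝ))) ≤ rho X (Yset (X : Set (Fin d → ℝ))) :=
    rho_mono X hex (Yset_finite X.finite_toSet) hsub'
  set B := 900 * Lg * psiStar X θstar xstar with hBdef
  have hchain : ((5:ℝ)/4)^s * (4 * rho X (Yset (X : Set (Fin d → ℝ)))) ≤ B := by
    rw [← hH1]
    exact hfinal.trans hHub
  have hBpos : 0 < B := by
    have hp : (0:ℝ) < ((5:ℝ)/4)^s * (4 * rho X (Yset (X : Set (Fin d → ℝ)))) := by positivity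
    linarith
  have hpow : ((5:ℝ)/4)^s ≤ B / rho X (YstarSet xstar (X : Set (Fin d → ℝ))) := by
    rw [le_div_iff₀ hρstar]
    calc ((5:ℝ)/4)^s * rho X (YstarSet xstar (X : Set (Fin d → ℝ)))
        ≤ ((5:ℝ)/4)^s * (4 * rho X (Yset (X : Set (Fin d → ℝ)))) := by
          have h1 : rho X (YstarSet xstar (X : Set (Fin d → ℝ))) ≤
              4 * rho X (Yset (X : Set (Fin d → ℝ))) := by linarith
          exact mul_le_mul_of_nonneg_left h1 (by positivity)
      _ ≤ B := hchain
  have hslog : (s:ℝ) ≤ Real.logb (5/4) (B / rho X (YstarSet xstar (X : Set (Fin d → ℝ)))) := by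
    have hbb : (1:ℝ) < 5/4 := by norm_num
    have hppos : (0:ℝ) < ((5:ℝ)/4)^s := by positivity
    calc (s:ℝ) = Real.logb (5/4) (((5:ℝ)/4)^s) := by
          rw [Real.logb_pow, Real.logb_self_eq_one hbb, mul_one]
      _ ≤ _ := Real.logb_le_logb_of_le hbb hppos hpow
  have hαs : α + s = m + 1 := by
    have hpart := Finset.card_filter_add_card_filter_not
      (s := Finset.Icc 1 (m+1)) (p := fun r => U r = U (r+1))
    have hcard : (Finset.Icc 1 (m+1)).card = m + 1 := by
      rw [Nat.card_Icc]
      omega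
    have hne' : ¬ (U (m+1) = U (m+1+1)) := by
      intro hcontra
      exact hRleast (m+1) (by omega) (by omega) (hcontra.trans hRmem)
    have hIcc : Finset.Icc 1 (m+1) = insert (m+1) (Finset.Icc 1 m) := by
      ext t
      simp only [Finset.mem_Icc, Finset.mem_insert]
      omega
    have hfeq : ((Finset.Icc 1 (m+1)).filter (fun r => U r = U (r+1))).card = s := by
      rw [hIcc, Finset.filter_insert, if_neg hne', hsdef]
    have hαeq : α = ((Finset.Icc 1 (m+1)).filter (fun r => ¬ (U r = U (r+1)))).card := hα
    omega
  have hgoal2 : ((m:ℝ) + 2) ≤ α + 2 +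
      Real.logb (5/4) (B / rho X (YstarSet xstar (X : Set (Fin d → ℝ)))) := by
    have hcast : (α:ℝ) + (s:ℝ) = (m:ℝ) + 1 := by exact_mod_cast hαs
    linarith
  have hcast2 : ((m + 2 : ℕ):ℝ) = (m:ℝ) + 2 := by push_cast; ring
  rw [hcast2]
  exact hgoal2
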